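/- Fix θ ∈ (0, π/2], β ∈ (0, π/2), and b ∈ ℝ. Then the second derivative with respect to β of the function β' ↦ ϑ(λ, β', b), evaluated at β, tends to −1/(sin β)² as λ → +∞. -/

import Mathlib

noncomputable def vartheta (θ lam β b : ℝ) : ℝ :=
  Real.arsinh (Real.sinh (b + Real.arsinh (Real.sinh lam / Real.sin θ)) * Real.sin β)

open Real Filter

lemma my_deriv1 (c x : ℝ) :
    HasDerivAt (fun y => arsinh (c * sin y)) (c * cos x / Real.sqrt (1 + (c * sin x)^2)) x := by
  have h1 : HasDerivAt (fun y => c * sin y) (c * cos x) x := (hasDerivAt_sin x).const_mul c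
  have h2 := (Real.hasDerivAt_arsinh (c * sin x)).comp x h1
  refine h2.congr_deriv (Eq.symm ?_)
  ring

lemma my_deriv2 (c x : ℝ) :
    HasDerivAt (fun y => c * cos y / Real.sqrt (1 + (c * sin y)^2))
      (-(c * (1 + c^2) * sin x) / ((1 + (c * sin x)^2) * Real.sqrt (1 + (c * sin x)^2))) x := by
  have hDpos : (0:ℝ) < 1 + (c * sin x)^2 := by positivity
  have hsq : Real.sqrt (1 + (c * sin x)^2) > 0 := Real.sqrt_pos.2 hDpos
  have hu : HasDerivAt (fun y => c * cos y) (-(c * sin x)) x := by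
    simpa [mul_comm, mul_neg] using (hasDerivAt_cos x).const_mul c
  have hin : HasDerivAt (fun y => 1 + (c * sin y)^2) (2 * (c * sin x) * (c * cos x)) x := by
    have := (((hasDerivAt_sin x).const_mul c).pow 2).const_add 1
    refine this.congr_deriv (Eq.symm ?_)
    ring
  have hv : HasDerivAt (fun y => Real.sqrt (1 + (c * sin y)^2))
      ((2 * (c * sin x) * (c * cos x)) / (2 * Real.sqrt (1 + (c * sin x)^2))) x :=
    hin.sqrt hDpos.ne'
  have h := hu.div hv hsq.ne'
  refine h.congr_deriv (Eq.symm ?_)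
  have hr : Real.sqrt (1 + (c * sin x)^2) ^ 2 = 1 + (c * sin x)^2 :=
    Real.sq_sqrt hDpos.le
  have hcos : cos x ^ 2 = 1 - sin x ^ 2 := by
    have := sin_sq_add_cos_sq x; linarith
  rw [div_eq_div_iff (by positivity) (by positivity)]
  generalize hS : Real.sqrt (1 + (c * sin x)^2) = S at hr hsq ⊢
  field_simp
  linear_combination (c * Real.sin x * (1 + c ^ 2 * Real.sin x ^ 2) - c * (1 + c ^ 2) * Real.sin x) * hr +
    (c ^ 3 * Real.sin x * (1 + c ^ 2 * Real.sin x ^ 2)) * hcos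

lemma tendsto_sinh_atTop' : Tendsto Real.sinh atTop atTop :=
  Real.sinh_strictMono.monotone.tendsto_atTop_atTop fun b => ⟨arsinh b, (Real.sinh_arsinh b).ge⟩

lemma tendsto_arsinh_atTop' : Tendsto Real.arsinh atTop atTop :=
  Real.arsinh_strictMono.monotone.tendsto_atTop_atTop fun b => ⟨Real.sinh b, (Real.arsinh_sinh b).ge⟩

theorem iteratedDeriv_two_vartheta_tendsto (θ β b : ℝ) (hθ : θ ∈ Set.Ioc 0 (Real.pi / 2))
    (hβ : β ∈ Set.Ioo 0 (Real.pi / 2)) :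
    Filter.Tendsto (fun lam : ℝ => iteratedDeriv 2 (fun β' : ℝ => vartheta θ lam β' b) β)
      Filter.atTop (nhds (-1 / (Real.sin β) ^ 2)) := by
  set s := Real.sin β with hs
  have hspos : 0 < s := Real.sin_pos_of_pos_of_lt_pi hβ.1 (lt_trans hβ.2 (by linarith [Real.pi_pos]))
  have hsθ : 0 < Real.sin θ := Real.sin_pos_of_pos_of_lt_pi hθ.1
    (lt_of_le_of_lt hθ.2 (by linarith [Real.pi_pos]))
  set C : ℝ → ℝ := fun lam => Real.sinh (b + Real.arsinh (Real.sinh lam / Real.sin θ)) with hC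
  -- the second derivative formula
  have key : ∀ lam, iteratedDeriv 2 (fun β' : ℝ => vartheta θ lam β' b) β
      = -(C lam * (1 + (C lam)^2) * s) / ((1 + (C lam * s)^2) * Real.sqrt (1 + (C lam * s)^2)) := by
    intro lam
    have hf : (fun β' : ℝ => vartheta θ lam β' b) = fun y => arsinh (C lam * sin y) := rfl
    rw [hf, iteratedDeriv_succ, iteratedDeriv_one]
    have hd1 : deriv (fun y => arsinh (C lam * sin y))
        = fun y => C lam * cos y / Real.sqrt (1 + (C lam * sin y)^2) := by
      funext y; exact (my_deriv1 (C lam) y).deriv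
    rw [hd1]
    exact (my_deriv2 (C lam) β).deriv
  simp only [key]
  -- C tends to atTop
  have hCtop : Tendsto C atTop atTop := by
    apply tendsto_sinh_atTop'.comp
    apply tendsto_atTop_add_const_left
    exact tendsto_arsinh_atTop'.comp (tendsto_sinh_atTop'.atTop_div_const hsθ)
  -- the limit function in c
  have hF : Tendsto (fun c : ℝ =>
      -(c * (1 + c^2) * s) / ((1 + (c * s)^2) * Real.sqrt (1 + (c * s)^2)))
      atTop (nhds (-1 / s ^ 2)) := by
    have hG : Tendsto (fun t : ℝ =>
        -((t + 1) * s) / ((t + s^2) * Real.sqrt (t + s^2))) (nhds 0) (nhds (-1 / s ^ 2)) := by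
      have hcont : ContinuousAt (fun t : ℝ =>
          -((t + 1) * s) / ((t + s^2) * Real.sqrt (t + s^2))) 0 := by
        apply ContinuousAt.div
        · fun_prop
        · exact ContinuousAt.mul (by fun_prop) ((Real.continuous_sqrt.continuousAt).comp (by fun_prop))
        · simp [Real.sqrt_sq hspos.le]
          positivity
      have h0 : (-1 : ℝ) / s ^ 2 = -s / (s ^ 2 * Real.sqrt (s ^ 2)) := by
        rw [Real.sqrt_sq hspos.le]; field_simp
      rw [h0]
      simpa using hcont.tendsto
    have hcomp := hG.comp (tendsto_inv_atTop_zero.comp (tendsto_pow_atTop (n := 2) two_ne_zero))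
    apply hcomp.congr'
    filter_upwards [eventually_gt_atTop (0:ℝ)] with c hc
    have hc2 : (0:ℝ) < c^2 := by positivity
    show -(((c^2)⁻¹ + 1) * s) / (((c^2)⁻¹ + s^2) * Real.sqrt ((c^2)⁻¹ + s^2))
        = -(c * (1 + c^2) * s) / ((1 + (c * s)^2) * Real.sqrt (1 + (c * s)^2))
    have h1 : (c^2)⁻¹ + s^2 = (1 + (c*s)^2) / c^2 := by field_simp
    have h2 : Real.sqrt ((c^2)⁻¹ + s^2) = Real.sqrt (1 + (c*s)^2) / c := by
      rw [h1, Real.sqrt_div (by positivity), Real.sqrt_sq hc.le]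
    rw [h2, h1]
    have hrpos : 0 < Real.sqrt (1 + (c*s)^2) := Real.sqrt_pos.2 (by positivity)
    field_simp
  exact hF.comp hCtop
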